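/- Let K be an imaginary quadratic field and N a positive integer. Every ideal of the ring of integers O_K of norm N can be written uniquely as kI, where k is a positive integer with k² dividing N and I is a primitive ideal (cyclic quotient) of norm N/k². -/

import Mathlib

set_option synthInstance.maxHeartbeats 1000000
set_option maxHeartbeats 1000000

open NumberField

section Aux

variable {K : Type*} [Field K] [NumberField K]

lemma aux_norm_span_nat (h2 : Module.finrank ℚ K = 2) (k : ℕ) :
    Ideal.absNorm (Ideal.span {(k : 𝓞 K)}) = k ^ 2 := by
  have hck : ((k : 𝓞 K)) = algebraMap ℤ (𝓞 K) (k : ℤ) := by simp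
  have hcard : Fintype.card (Module.Free.ChooseBasisIndex ℤ (𝓞 K)) = 2 := by
    rw [← Module.finrank_eq_card_chooseBasisIndex, RingOfIntegers.rank, h2]
  rw [Ideal.absNorm_span_singleton, hck,
    Algebra.norm_algebraMap_of_basis (Module.Free.chooseBasis ℤ (𝓞 K)), hcard]
  simp [Int.natAbs_pow]

lemma aux_card_quot (I : Ideal (𝓞 K)) : Nat.card ((𝓞 K) ⧸ I) = Ideal.absNorm I := by
  rw [Ideal.absNorm_apply, Submodule.cardQuot_apply]

/-- cyclic quotient implies primitive -/
lemma aux_prim_of_cyclic (h2 : Module.finrank ℚ K = 2) (I : Ideal (𝓞 K))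
    (hc : IsAddCyclic ((𝓞 K) ⧸ I)) (p : ℕ) (hp : p.Prime) :
    ¬ I ≤ Ideal.span {(p : 𝓞 K)} := by
  intro hle
  set P : Ideal (𝓞 K) := Ideal.span {(p : 𝓞 K)} with hP
  have hsurj : Function.Surjective (Ideal.Quotient.factor hle) := by
    intro y
    obtain ⟨x, rfl⟩ := Ideal.Quotient.mk_surjective y
    exact ⟨Ideal.Quotient.mk I x, rfl⟩
  haveI : IsAddCyclic ((𝓞 K) ⧸ P) :=
    isAddCyclic_of_surjective (Ideal.Quotient.factor hle) hsurj
  have hcard : Nat.card ((𝓞 K) ⧸ P) = p ^ 2 := by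
    rw [aux_card_quot, aux_norm_span_nat h2]
  haveI : Finite ((𝓞 K) ⧸ P) := by
    refine Nat.finite_of_card_ne_zero ?_
    rw [hcard]
    exact pow_ne_zero 2 hp.pos.ne'
  obtain ⟨g, hg⟩ := IsAddCyclic.exists_generator (α := (𝓞 K) ⧸ P)
  have hog : addOrderOf g = p ^ 2 := by
    rw [addOrderOf_eq_card_of_forall_mem_zmultiples hg, hcard]
  have hpg : p • g = 0 := by
    obtain ⟨x, rfl⟩ := Ideal.Quotient.mk_surjective (I := P) g
    rw [← map_nsmul, nsmul_eq_mul]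
    exact Ideal.Quotient.eq_zero_iff_mem.mpr
      (Ideal.mul_mem_right _ _ (Ideal.subset_span rfl))
  have hdvd : p ^ 2 ∣ p := hog ▸ addOrderOf_dvd_of_nsmul_eq_zero hpg
  have := Nat.le_of_dvd hp.pos hdvd
  nlinarith [hp.two_le]

/-- primitive implies cyclic quotient -/
lemma aux_cyclic_of_prim (h2 : Module.finrank ℚ K = 2) (I : Ideal (𝓞 K)) (hI : I ≠ ⊥)
    (hprim : ∀ p : ℕ, p.Prime → ¬ I ≤ Ideal.span {(p : 𝓞 K)}) :
    IsAddCyclic ((𝓞 K) ⧸ I) := by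
  classical
  set ι := Module.Free.ChooseBasisIndex ℤ (𝓞 K) with hι
  set b : Module.Basis ι ℤ (𝓞 K) := Module.Free.chooseBasis ℤ (𝓞 K) with hb
  set a : ι → ℕ := fun i => (I.smithCoeffs b hI i).natAbs with ha
  have hane : ∀ i, a i ≠ 0 := fun i =>
    Int.natAbs_ne_zero.mpr (Ideal.smithCoeffs_ne_zero b I hI i)
  haveI : ∀ i, NeZero (a i) := fun i => ⟨hane i⟩
  have hcard : Fintype.card ι = 2 := by
    rw [show Fintype.card ι = Module.finrank ℤ (𝓞 K) from
      (Module.finrank_eq_card_chooseBasisIndex ℤ _).symm, RingOfIntegers.rank, h2]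
  obtain ⟨i₀, i₁, hne, huniv⟩ : ∃ i j : ι, i ≠ j ∧ ∀ k : ι, k = i ∨ k = j := by
    have e := Fintype.equivFinOfCardEq hcard
    have h01 : ∀ v : Fin 2, v = 0 ∨ v = 1 := by decide
    refine ⟨e.symm 0, e.symm 1, fun h => by simpa using e.symm.injective h, fun k => ?_⟩
    rcases h01 (e k) with hv | hv
    · left; rw [← hv, Equiv.symm_apply_apply]
    · right; rw [← hv, Equiv.symm_apply_apply]
  -- coprimality of the two smith coefficients
  have hcop : Nat.Coprime (a i₀) (a i₁) := by
    by_contra hcop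
    obtain ⟨p, hp, hpd⟩ := Nat.exists_prime_and_dvd hcop
    have hpall : ∀ i, ((p : ℤ)) ∣ I.smithCoeffs b hI i := by
      intro i
      have h1 : p ∣ a i := by
        rcases huniv i with rfl | rfl
        · exact hpd.trans (Nat.gcd_dvd_left _ _)
        · exact hpd.trans (Nat.gcd_dvd_right _ _)
      have h2' : ((p : ℤ)) ∣ ((a i : ℤ)) := Int.natCast_dvd_natCast.mpr h1
      exact h2'.trans (Int.natAbs_dvd.mpr dvd_rfl)
    refine hprim p hp ?_
    intro x hx
    have hrepr := (Ideal.selfBasis b I hI).sum_repr ⟨x, hx⟩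
    have hx' : x = ∑ i, ((Ideal.selfBasis b I hI).repr ⟨x, hx⟩ i) •
        ((Ideal.selfBasis b I hI i : 𝓞 K)) := by
      conv_lhs => rw [show x = ((⟨x, hx⟩ : I) : 𝓞 K) from rfl, ← hrepr]
      simp only [AddSubmonoidClass.coe_finset_sum, SetLike.val_smul]
      rfl
    rw [hx']
    refine Ideal.sum_mem _ fun i _ => ?_
    refine zsmul_mem ?_ _
    rw [Ideal.selfBasis_def, zsmul_eq_mul]
    refine Ideal.mem_span_singleton.mpr (Dvd.dvd.mul_right ?_ _)
    obtain ⟨t, ht⟩ := hpall i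
    exact ⟨(t : 𝓞 K), by rw [ht]; push_cast; ring⟩
  -- the quotient is cyclic
  have e := I.quotientEquivPiZMod b hI
  set g : ∀ i, ZMod (a i) := fun _ => 1 with hg
  have horder : addOrderOf g = a i₀ * a i₁ := by
    apply Nat.dvd_antisymm
    · apply addOrderOf_dvd_of_nsmul_eq_zero
      funext i
      have hdvd : a i ∣ a i₀ * a i₁ := by
        rcases huniv i with rfl | rfl
        · exact dvd_mul_right _ _
        · exact dvd_mul_left _ _
      have : (a i₀ * a i₁) • (1 : ZMod (a i)) = 0 :=
        addOrderOf_dvd_iff_nsmul_eq_zero.mp (by rw [ZMod.addOrderOf_one]; exact hdvd)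
      simpa [hg] using this
    · have hkill := addOrderOf_nsmul_eq_zero g
      have hcomp : ∀ i, a i ∣ addOrderOf g := by
        intro i
        have := congrFun hkill i
        simp only [Pi.smul_apply, Pi.zero_apply, hg] at this
        rw [← ZMod.addOrderOf_one (a i)]
        exact addOrderOf_dvd_iff_nsmul_eq_zero.mpr this
      exact Nat.Coprime.mul_dvd_of_dvd_of_dvd hcop (hcomp i₀) (hcomp i₁)
  have hcardpi : Nat.card (∀ i, ZMod (a i)) = a i₀ * a i₁ := by
    rw [Nat.card_pi]
    have huniveq : (Finset.univ : Finset ι) = {i₀, i₁} := by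
      ext k
      simpa using huniv k
    rw [huniveq, Finset.prod_insert (by simpa using hne), Finset.prod_singleton,
      Nat.card_zmod, Nat.card_zmod]
  haveI : IsAddCyclic (∀ i, ZMod (a i)) :=
    isAddCyclic_of_addOrderOf_eq_card g (by rw [horder, hcardpi])
  exact isAddCyclic_of_surjective e.symm.toAddMonoidHom e.symm.surjective

end Aux

section Aux2

variable {K : Type*} [Field K] [NumberField K]

lemma aux_coprime_span {p k : ℕ} (h : Nat.Coprime p k) :
    IsCoprime (Ideal.span {(p : 𝓞 K)} : Ideal (𝓞 K)) (Ideal.span {(k : 𝓞 K)}) := by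
  rw [Ideal.isCoprime_span_singleton_iff]
  have : IsCoprime ((p : ℤ)) ((k : ℤ)) := by
    rw [Int.isCoprime_iff_gcd_eq_one]
    simpa [Int.gcd_natCast_natCast] using h
  simpa using this.map (algebraMap ℤ (𝓞 K))

lemma aux_span_nat_ne_zero {k : ℕ} (hk : 0 < k) :
    (Ideal.span {(k : 𝓞 K)} : Ideal (𝓞 K)) ≠ 0 := by
  have : ((k : 𝓞 K)) ≠ 0 := Nat.cast_ne_zero.mpr hk.ne'
  simpa [Ideal.zero_eq_bot, ne_eq, Ideal.span_singleton_eq_bot] using this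

/-- if a prime `p` divides `span{k} * I` with `I` primitive, then `p ∣ k` -/
lemma aux_prime_dvd {p k : ℕ} (hp : p.Prime) {I J : Ideal (𝓞 K)}
    (hI : ∀ q : ℕ, q.Prime → ¬ I ≤ Ideal.span {(q : 𝓞 K)})
    (hJ : J = Ideal.span {(k : 𝓞 K)} * I)
    (hle : J ≤ Ideal.span {(p : 𝓞 K)}) : p ∣ k := by
  by_contra hpk
  have hcop : Nat.Coprime p k := (Nat.Prime.coprime_iff_not_dvd hp).mpr hpk
  have hdvd : Ideal.span {(p : 𝓞 K)} ∣ Ideal.span {(k : 𝓞 K)} * I := by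
    rw [← hJ]
    exact Ideal.dvd_iff_le.mpr hle
  have : Ideal.span {(p : 𝓞 K)} ∣ I :=
    (aux_coprime_span hcop).dvd_of_dvd_mul_left hdvd
  exact hI p hp (Ideal.dvd_iff_le.mp this)

lemma aux_exist (h2 : Module.finrank ℚ K = 2) :
    ∀ N : ℕ, 0 < N → ∀ J : Ideal (𝓞 K), Ideal.absNorm J = N →
    ∃ k I, 0 < k ∧ k ^ 2 ∣ N ∧ (∀ p : ℕ, p.Prime → ¬ I ≤ Ideal.span {(p : 𝓞 K)}) ∧
      Ideal.absNorm I = N / k ^ 2 ∧ J = Ideal.span {(k : 𝓞 K)} * I := by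
  intro N
  induction N using Nat.strong_induction_on with
  | _ N ih =>
    intro hN J hJ
    by_cases hprim : ∀ p : ℕ, p.Prime → ¬ J ≤ Ideal.span {(p : 𝓞 K)}
    · exact ⟨1, J, one_pos, by simpa using one_dvd N, hprim, by simpa using hJ, by simp⟩
    · push_neg at hprim
      obtain ⟨p, hp, hle⟩ := hprim
      obtain ⟨J', hJ'⟩ : Ideal.span {(p : 𝓞 K)} ∣ J := Ideal.dvd_iff_le.mpr hle
      have hnorm : N = p ^ 2 * Ideal.absNorm J' := by
        rw [← hJ, hJ', map_mul, aux_norm_span_nat h2]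
      have hppos : 0 < p ^ 2 := pow_pos hp.pos 2
      have hJ'pos : 0 < Ideal.absNorm J' := by
        rcases Nat.eq_zero_or_pos (Ideal.absNorm J') with h | h
        · rw [h, mul_zero] at hnorm; omega
        · exact h
      have hlt : Ideal.absNorm J' < N := by
        have h2le : 2 ≤ p ^ 2 := by nlinarith [hp.two_le]
        calc Ideal.absNorm J' < 2 * Ideal.absNorm J' := by omega
          _ ≤ p ^ 2 * Ideal.absNorm J' := Nat.mul_le_mul_right _ h2le
          _ = N := hnorm.symm
      obtain ⟨k, I, hk, hkdvd, hIprim, hInorm, hdec⟩ := ih _ hlt hJ'pos J' rfl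
      refine ⟨p * k, I, Nat.mul_pos hp.pos hk, ?_, hIprim, ?_, ?_⟩
      · rw [hnorm, mul_pow]
        exact mul_dvd_mul_left _ hkdvd
      · rw [hInorm, hnorm, mul_pow, Nat.mul_div_mul_left _ _ hppos]
      · rw [hJ', hdec, ← mul_assoc, Ideal.span_singleton_mul_span_singleton]
        push_cast
        rfl

lemma aux_uniq (h2 : Module.finrank ℚ K = 2) :
    ∀ k : ℕ, ∀ k' : ℕ, 0 < k → 0 < k' →
    ∀ I I' : Ideal (𝓞 K),
    (∀ p : ℕ, p.Prime → ¬ I ≤ Ideal.span {(p : 𝓞 K)}) →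
    (∀ p : ℕ, p.Prime → ¬ I' ≤ Ideal.span {(p : 𝓞 K)}) →
    Ideal.span {(k : 𝓞 K)} * I = Ideal.span {(k' : 𝓞 K)} * I' → k = k' ∧ I = I' := by
  intro k
  induction k using Nat.strong_induction_on with
  | _ k ih =>
    intro k' hk hk' I I' hI hI' heq
    by_cases hone : k = 1
    · subst hone
      have hk'1 : k' = 1 := by
        by_contra h
        obtain ⟨p, hp, hpd⟩ := Nat.exists_prime_and_dvd h
        have hle : Ideal.span {((1 : ℕ) : 𝓞 K)} * I ≤ Ideal.span {(p : 𝓞 K)} := by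
          rw [heq]
          calc Ideal.span {((k' : ℕ) : 𝓞 K)} * I' ≤ Ideal.span {((k' : ℕ) : 𝓞 K)} :=
                Ideal.mul_le_left
            _ ≤ Ideal.span {(p : 𝓞 K)} := by
                rw [Ideal.span_singleton_le_span_singleton]
                obtain ⟨t, rfl⟩ := hpd
                exact ⟨(t : 𝓞 K), by push_cast; ring⟩
        have : p ∣ 1 := aux_prime_dvd hp hI rfl hle
        exact hp.one_lt.ne' (Nat.eq_one_of_dvd_one this ▸ rfl)
      subst hk'1
      refine ⟨rfl, ?_⟩
      simpa using heq
    · obtain ⟨p, hp, hpd⟩ := Nat.exists_prime_and_dvd hone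
      have hlek : Ideal.span {(k : 𝓞 K)} * I ≤ Ideal.span {(p : 𝓞 K)} := by
        calc Ideal.span {(k : 𝓞 K)} * I ≤ Ideal.span {(k : 𝓞 K)} := Ideal.mul_le_left
          _ ≤ Ideal.span {(p : 𝓞 K)} := by
              rw [Ideal.span_singleton_le_span_singleton]
              obtain ⟨t, rfl⟩ := hpd
              exact ⟨(t : 𝓞 K), by push_cast; ring⟩
      have hpk' : p ∣ k' := aux_prime_dvd hp hI' heq hlek
      obtain ⟨m, rfl⟩ := hpd
      obtain ⟨m', rfl⟩ := hpk'
      have hm : 0 < m := by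
        rcases Nat.eq_zero_or_pos m with h | h
        · subst h; simp at hk
        · exact h
      have hm' : 0 < m' := by
        rcases Nat.eq_zero_or_pos m' with h | h
        · subst h; simp at hk'
        · exact h
      have heq' : Ideal.span {(m : 𝓞 K)} * I = Ideal.span {(m' : 𝓞 K)} * I' := by
        have hpspan : (Ideal.span {(p : 𝓞 K)} : Ideal (𝓞 K)) ≠ 0 :=
          aux_span_nat_ne_zero hp.pos
        apply mul_left_cancel₀ hpspan
        calc Ideal.span {(p : 𝓞 K)} * (Ideal.span {(m : 𝓞 K)} * I)
            = Ideal.span {((p * m : ℕ) : 𝓞 K)} * I := by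
              rw [← mul_assoc, Ideal.span_singleton_mul_span_singleton]; push_cast; rfl
          _ = Ideal.span {((p * m' : ℕ) : 𝓞 K)} * I' := heq
          _ = Ideal.span {(p : 𝓞 K)} * (Ideal.span {(m' : 𝓞 K)} * I') := by
              rw [← mul_assoc, Ideal.span_singleton_mul_span_singleton]; push_cast; rfl
      have hmlt : m < p * m := by nlinarith [hp.two_le]
      obtain ⟨hmm, hII⟩ := ih m hmlt m' hm hm' I I' hI hI' heq'
      exact ⟨by rw [hmm], hII⟩

end Aux2

/-- Every ideal of norm `N` of the ring of integers of an imaginary quadratic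
field can be written uniquely as `kI` with `k` a positive integer, `k² ∣ N`,
and `I` a primitive ideal (cyclic quotient) of norm `N/k²`. -/
theorem ideal_eq_unique_mul_primitive (d : ℕ) (hd : 0 < d) (hdsq : Squarefree d)
    (K : Type*) [Field K] [NumberField K]
    (h2 : Module.finrank ℚ K = 2)
    (s : K) (hs : s ^ 2 = -(d : K))
    (N : ℕ) (hN : 0 < N)
    (J : Ideal (𝓞 K)) (hJ : Ideal.absNorm J = N) :
    ∃! kI : ℕ × Ideal (𝓞 K),
      0 < kI.1 ∧ kI.1 ^ 2 ∣ N ∧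
      IsAddCyclic ((𝓞 K) ⧸ kI.2) ∧
      Ideal.absNorm kI.2 = N / kI.1 ^ 2 ∧
      J = Ideal.span {(kI.1 : 𝓞 K)} * kI.2 := by
  obtain ⟨k, I, hk, hkd, hIprim, hIn, hdec⟩ := aux_exist h2 N hN J hJ
  have hIne : I ≠ ⊥ := by
    intro hbot
    have : Ideal.absNorm I = 0 := by rw [hbot, Ideal.absNorm_bot]
    rw [hIn] at this
    exact (Nat.div_pos (Nat.le_of_dvd hN hkd) (pow_pos hk 2)).ne' this
  refine ⟨(k, I), ⟨hk, hkd, aux_cyclic_of_prim h2 I hIne hIprim, hIn, hdec⟩, ?_⟩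
  rintro ⟨k', I'⟩ ⟨hk', hkd', hcyc', hIn', hdec'⟩
  have hprim' : ∀ p : ℕ, p.Prime → ¬ I' ≤ Ideal.span {(p : 𝓞 K)} :=
    fun p hp => aux_prim_of_cyclic h2 I' hcyc' p hp
  obtain ⟨h1, h3⟩ := aux_uniq h2 k' k hk' hk I' I hprim' hIprim (by rw [← hdec', ← hdec])
  exact Prod.ext h1 h3
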